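/- For β ∈ (0, 1/2), the accelerated McWeeny ratio satisfies g₁(1/2, β) = 4, where g₁(x, β) = (p_mwa(x,β) − p_mwa(x,β)²)/(x − x²)² and p_mwa(x, β) = p_mw(3(12β² − 18β + 9)^{−1/2}(x − 1/2) + 1/2), p_mw(t) = 3t² − 2t³. Moreover g₁(x, β) ≤ 4 for all x ∈ [β, 1−β]. -/

import Mathlib

open Set

/-- For β ∈ (0,1/2), the accelerated McWeeny ratio satisfies g₁(1/2,β) = 4, where
g₁(x,β) = (p_mwa(x,β) − p_mwa(x,β)²)/(x − x²)² and
p_mwa(x,β) = p_mw(3(12β²−18β+9)^{−1/2}(x−1/2)+1/2), p_mw(t) = 3t²−2t³.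
Moreover g₁(x,β) ≤ 4 for all x ∈ [β, 1−β]. -/
theorem mwacc_g1_max (pmw : ℝ → ℝ) (hpmw : ∀ t : ℝ, pmw t = 3 * t ^ 2 - 2 * t ^ 3)
    (pmwa : ℝ → ℝ → ℝ)
    (hpmwa : ∀ x β : ℝ,
      pmwa x β = pmw (3 / Real.sqrt (12 * β ^ 2 - 18 * β + 9) * (x - 1 / 2) + 1 / 2))
    (g₁ : ℝ → ℝ → ℝ)
    (hg₁ : ∀ x β : ℝ, g₁ x β = (pmwa x β - (pmwa x β) ^ 2) / (x - x ^ 2) ^ 2)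
    (β : ℝ) (hβ : β ∈ Ioo (0 : ℝ) (1 / 2)) :
    g₁ (1 / 2) β = 4 ∧ ∀ x ∈ Icc β (1 - β), g₁ x β ≤ 4 := by
  obtain ⟨hβ0, hβ2⟩ := hβ
  have hQ : (0:ℝ) < 12 * β ^ 2 - 18 * β + 9 := by nlinarith
  have hr2 : (Real.sqrt (12 * β ^ 2 - 18 * β + 9)) ^ 2 = 12 * β ^ 2 - 18 * β + 9 :=
    Real.sq_sqrt hQ.le
  have hr0 : 0 < Real.sqrt (12 * β ^ 2 - 18 * β + 9) := Real.sqrt_pos.mpr hQ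
  constructor
  · rw [hg₁, hpmwa, hpmw]
    norm_num
  · intro x hx
    obtain ⟨hx1, hx2⟩ := hx
    have hx0 : 0 < x := lt_of_lt_of_le hβ0 hx1
    have hx1' : x < 1 := by linarith
    have hd : 0 < x - x ^ 2 := by nlinarith
    rw [hg₁, hpmwa, hpmw]
    rw [div_le_iff₀ (by positivity)]
    set s := 3 / Real.sqrt (12 * β ^ 2 - 18 * β + 9) * (x - 1 / 2) with hsdef
    have hrs : Real.sqrt (12 * β ^ 2 - 18 * β + 9) * s = 3 * (x - 1 / 2) := by
      rw [hsdef, ← mul_assoc, mul_div_assoc', mul_div_cancel_left₀ (3:ℝ) hr0.ne']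
    have hs2 : s ^ 2 * (12 * β ^ 2 - 18 * β + 9) = 9 * (x - 1 / 2) ^ 2 := by
      linear_combination (Real.sqrt (12 * β ^ 2 - 18 * β + 9) * s + 3 * (x - 1 / 2)) * hrs
        - s ^ 2 * hr2
    have huβ : (x - 1 / 2) ^ 2 ≤ (1 / 2 - β) ^ 2 := by nlinarith
    have hub : s ^ 2 ≤ 1 / 4 := by nlinarith
    have hlb : (x - 1 / 2) ^ 2 ≤ s ^ 2 := by
      nlinarith [mul_nonneg (sq_nonneg s) (show (0:ℝ) ≤ 9 - (12 * β ^ 2 - 18 * β + 9) by nlinarith)]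
    nlinarith [sq_nonneg (1 / 4 - s ^ 2), mul_nonneg (sq_nonneg s) (sq_nonneg (1 / 4 - s ^ 2)),
      mul_nonneg (sub_nonneg.2 hlb) (by nlinarith : (0:ℝ) ≤ 1 / 2 - (x - 1 / 2) ^ 2 - s ^ 2)]
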